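/- Let W satisfy (Self) with constant λ ≤ 0, let V satisfy (Cross) and additionally be λ'-convex for some λ' ≤ 0, and let ν be a nonnegative finite Borel measure on ℝ^d with ν(ℝ^d) ≤ M. Let ξ, η ∈ P₂(ℝ^d), let γ be an optimal coupling of ξ and η for the 2-Wasserstein distance (i.e. γ ∈ Γ(ξ,η) and ∫|x−y|² dγ = d_{W₂}²(ξ,η)), and for s ∈ [0,1] set γ_s := ((1−s)π₁ + sπ₂)_# γ, where π₁, π₂ are the coordinate projections. Then for all s ∈ [0,1], ℱ_ν(γ_s) ≤ (1−s) ℱ_ν(ξ) + s ℱ_ν(η) − (1 + M/2) λ̄ s(1−s) d_{W₂}²(ξ,η), where λ̄ = min{λ, λ'}. -/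

import Mathlib

open MeasureTheory Filter
open scoped ENNReal NNReal RealInnerProductSpace

noncomputable section

/-- Euclidean space `ℝ^d`. -/
abbrev Rd (d : ℕ) := EuclideanSpace ℝ (Fin d)

/-- The set of couplings of two measures: measures on the product space with the
prescribed marginals. -/
def couplings {d : ℕ} (μ ν : Measure (Rd d)) : Set (Measure (Rd d × Rd d)) :=
  {γ | γ.map Prod.fst = μ ∧ γ.map Prod.snd = ν}

/-- Optimal transport cost with squared-distance cost, in `ℝ≥0∞`. -/
def cost2 {d : ℕ} (μ ν : Measure (Rd d)) : ℝ≥0∞ :=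
  ⨅ γ ∈ couplings μ ν, ∫⁻ z : Rd d × Rd d, ENNReal.ofReal (‖z.1 - z.2‖ ^ 2) ∂γ

/-- The squared 2-Wasserstein distance `d_{W₂}²(μ,ν)`, as a real number. -/
def W2sq {d : ℕ} (μ ν : Measure (Rd d)) : ℝ := (cost2 μ ν).toReal

/-- Membership in `P₂(ℝ^d)`: probability measure with finite second moment. -/
def MemP2 {d : ℕ} (μ : Measure (Rd d)) : Prop :=
  IsProbabilityMeasure μ ∧ ∫⁻ x, ENNReal.ofReal (‖x‖ ^ 2) ∂μ < ⊤

/-- The energy functional `ℱ_ν(μ) = (1/2)∫∫W(x-y) dμ(y) dμ(x) + ∫∫V(x-y) dν(y) dμ(x)`. -/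
def energy {d : ℕ} (W V : Rd d → ℝ) (ν μ : Measure (Rd d)) : ℝ :=
  (1 / 2) * ∫ x, (∫ y, W (x - y) ∂μ) ∂μ + ∫ x, (∫ y, V (x - y) ∂ν) ∂μ

/-- Assumption (Self) on the self-interaction potential `W`, with gradient `W'` away from
the origin, convexity parameter `lam ≤ 0` and Lipschitz constant `KW`. -/
structure IsSelfPotential {d : ℕ} (W : Rd d → ℝ) (W' : Rd d → Rd d) (lam : ℝ) (KW : ℝ≥0) :
    Prop where
  cont : Continuous W
  grad : ∀ x : Rd d, x ≠ 0 → HasGradientAt W (W' x) x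
  grad_cont : ContinuousOn W' {(0 : Rd d)}ᶜ
  even : ∀ x, W (-x) = W x
  lip : LipschitzWith KW W
  zero_at_zero : W 0 = 0
  growth : ∃ C > 0, ∀ x, W x ≤ C * (1 + ‖x‖ ^ 2)
  lam_nonpos : lam ≤ 0
  lam_convex : ConvexOn ℝ Set.univ fun x => W x - lam / 2 * ‖x‖ ^ 2

/-- Assumption (Cross) on the cross-interaction potential `V`, with gradient `V'` and
Lipschitz constant `KV`. -/
structure IsCrossPotential {d : ℕ} (V : Rd d → ℝ) (V' : Rd d → Rd d) (KV : ℝ≥0) :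
    Prop where
  contDiff : ContDiff ℝ 1 V
  grad : ∀ x, HasGradientAt V (V' x) x
  lip : LipschitzWith KV V
  bddBelow : ∃ V₀ : ℝ, ∀ x, V₀ ≤ V x

/-! ### Auxiliary lemmas -/

lemma interp_norm_sq {d : ℕ} (a b : Rd d) (s : ℝ) :
    ‖(1-s)•a + s•b‖^2 = (1-s)*‖a‖^2 + s*‖b‖^2 - s*(1-s)*‖a-b‖^2 := by
  have h1 : ‖(1-s)•a + s•b‖^2 = ⟪(1-s)•a + s•b, (1-s)•a + s•b⟫ :=
    (real_inner_self_eq_norm_sq _).symm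
  have h2 : ‖a‖^2 = ⟪a, a⟫ := (real_inner_self_eq_norm_sq _).symm
  have h3 : ‖b‖^2 = ⟪b, b⟫ := (real_inner_self_eq_norm_sq _).symm
  have h4 : ‖a-b‖^2 = ⟪a-b, a-b⟫ := (real_inner_self_eq_norm_sq _).symm
  rw [h1, h2, h3, h4]
  simp only [inner_add_left, inner_add_right, inner_sub_left, inner_sub_right,
    real_inner_smul_left, real_inner_smul_right, real_inner_comm a b]
  ring

lemma lamConvex_bound {d : ℕ} {f : Rd d → ℝ} {c : ℝ}
    (hf : ConvexOn ℝ Set.univ fun x => f x - c/2 * ‖x‖^2) {s : ℝ}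
    (h0 : 0 ≤ s) (h1 : s ≤ 1) (a b : Rd d) :
    f ((1-s)•a + s•b) ≤ (1-s)*f a + s*f b - c/2*(s*(1-s))*‖a-b‖^2 := by
  have key := hf.2 (Set.mem_univ a) (Set.mem_univ b) (by linarith : (0:ℝ) ≤ 1-s) h0
    (by ring : (1-s) + s = 1)
  simp only [smul_eq_mul] at key
  have hn := interp_norm_sq a b s
  have h5 : f ((1-s)•a + s•b) ≤ (1-s)*(f a - c/2*‖a‖^2) + s*(f b - c/2*‖b‖^2)
      + c/2*‖(1-s)•a + s•b‖^2 := by linarith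
  rw [hn] at h5
  refine h5.trans_eq ?_
  ring

lemma memP2_integrable_sq {d : ℕ} {μ : Measure (Rd d)} (h : MemP2 μ) :
    Integrable (fun x : Rd d => ‖x‖^2) μ := by
  refine ⟨(continuous_norm.pow 2).aestronglyMeasurable, ?_⟩
  rw [hasFiniteIntegral_iff_ofReal (Eventually.of_forall fun x => by positivity)]
  exact h.2

lemma memP2_integrable_norm {d : ℕ} {μ : Measure (Rd d)} (h : MemP2 μ) :
    Integrable (fun x : Rd d => ‖x‖) μ := by
  haveI := h.1
  refine (((integrable_const (1:ℝ)).add (memP2_integrable_sq h)).mono'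
    continuous_norm.aestronglyMeasurable (Eventually.of_forall fun x => ?_))
  have hx := norm_nonneg x
  simp only [norm_norm, Pi.add_apply]
  nlinarith

lemma sq_sub_le {d : ℕ} (u v : Rd d) : ‖u - v‖^2 ≤ 2*‖u‖^2 + 2*‖v‖^2 := by
  have h := norm_sub_le u v
  have hu := norm_nonneg u
  have hv := norm_nonneg v
  have huv := norm_nonneg (u - v)
  have h2 : ‖u - v‖^2 ≤ (‖u‖ + ‖v‖)^2 := by nlinarith
  nlinarith [sq_nonneg (‖u‖ - ‖v‖)]

set_option maxHeartbeats 2000000 in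
/-- Convexity inequality for the energy functional `ℱ_ν` along Wasserstein geodesic
interpolations `γ_s = ((1−s)π₁ + sπ₂)_#γ` of an optimal coupling `γ` of `ξ, η`:
`ℱ_ν(γ_s) ≤ (1−s)ℱ_ν(ξ) + sℱ_ν(η) − (1 + M/2) λ̄ s(1−s) d_{W₂}²(ξ,η)` with
`λ̄ = min{λ, λ'}`. -/
theorem statement_6 {d : ℕ} (W : Rd d → ℝ) (W' : Rd d → Rd d) (lam : ℝ) (KW : ℝ≥0)
    (hW : IsSelfPotential W W' lam KW)
    (V : Rd d → ℝ) (V' : Rd d → Rd d) (KV : ℝ≥0) (hV : IsCrossPotential V V' KV)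
    (lam' : ℝ) (hlam' : lam' ≤ 0)
    (hVconv : ConvexOn ℝ Set.univ fun x => V x - lam' / 2 * ‖x‖ ^ 2)
    (M : ℝ) (ν : Measure (Rd d)) (hνfin : IsFiniteMeasure ν)
    (hνM : (ν Set.univ).toReal ≤ M)
    (ξ η : Measure (Rd d)) (hξ : MemP2 ξ) (hη : MemP2 η)
    (γ : Measure (Rd d × Rd d)) (hγ : γ ∈ couplings ξ η)
    (hγopt : ∫⁻ z : Rd d × Rd d, ENNReal.ofReal (‖z.1 - z.2‖ ^ 2) ∂γ = cost2 ξ η) :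
    ∀ s ∈ Set.Icc (0 : ℝ) 1,
      energy W V ν
          (Measure.map (fun z : Rd d × Rd d => (1 - s) • z.1 + s • z.2) γ) ≤
        (1 - s) * energy W V ν ξ + s * energy W V ν η -
          (1 + M / 2) * min lam lam' * (s * (1 - s)) * W2sq ξ η := by
  obtain ⟨hγ1, hγ2⟩ := hγ
  rintro s ⟨hs0, hs1⟩
  haveI hξp : IsProbabilityMeasure ξ := hξ.1
  haveI hηp : IsProbabilityMeasure η := hη.1
  haveI hγp : IsProbabilityMeasure γ := by
    constructor
    have h := Measure.map_apply (measurable_fst : Measurable (Prod.fst : Rd d × Rd d → Rd d))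
      (MeasurableSet.univ (α := Rd d)) (μ := γ)
    rw [hγ1] at h
    simp only [Set.preimage_univ, measure_univ] at h
    exact h.symm
  haveI hBS : BorelSpace ((Rd d × Rd d) × Rd d × Rd d) := Prod.borelSpace
  simp only [energy]
  set T : Rd d × Rd d → Rd d := fun z => (1 - s) • z.1 + s • z.2 with hTdef
  set G : Rd d → ℝ := fun x => ∫ y, V (x - y) ∂ν with hGdef
  have hTc : Continuous T := (continuous_fst.const_smul (1 - s)).add (continuous_snd.const_smul s)
  have hTm : Measurable T := hTc.measurable
  haveI : IsProbabilityMeasure (γ.map T) := Measure.isProbabilityMeasure_map hTm.aemeasurable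
  have hs1' : (0:ℝ) ≤ 1 - s := by linarith
  have hss : (0:ℝ) ≤ s * (1 - s) := mul_nonneg hs0 hs1'
  -- norm bound for T
  have hTn : ∀ z : Rd d × Rd d, ‖T z‖ ≤ ‖z.1‖ + ‖z.2‖ := by
    intro z
    calc ‖(1-s)•z.1 + s•z.2‖ ≤ ‖(1-s)•z.1‖ + ‖s•z.2‖ := norm_add_le _ _
    _ = (1-s) * ‖z.1‖ + s * ‖z.2‖ := by
        rw [norm_smul, norm_smul]
        simp only [Real.norm_eq_abs, abs_of_nonneg hs1', abs_of_nonneg hs0]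
    _ ≤ ‖z.1‖ + ‖z.2‖ := by
        have h1 := mul_nonneg hs0 (norm_nonneg z.1)
        have h2 := mul_nonneg hs1' (norm_nonneg z.2)
        nlinarith [norm_nonneg z.1, norm_nonneg z.2]
  -- basic bound on W
  have hWb : ∀ x : Rd d, |W x| ≤ (KW:ℝ) * ‖x‖ := by
    intro x
    have h := hW.lip.dist_le_mul x 0
    rw [Real.dist_eq, hW.zero_at_zero, sub_zero, dist_zero_right] at h
    exact h
  have hWc2 : Continuous (fun q : Rd d × Rd d => W (q.1 - q.2)) :=
    hW.cont.comp (continuous_fst.sub continuous_snd)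
  have hnc2 : Continuous (fun z : Rd d × Rd d => ‖z.1 - z.2‖^2) := by fun_prop
  -- moments
  have Iξ2 : Integrable (fun x : Rd d => ‖x‖^2) ξ := memP2_integrable_sq hξ
  have Iη2 : Integrable (fun x : Rd d => ‖x‖^2) η := memP2_integrable_sq hη
  have Iξ1 : Integrable (fun x : Rd d => ‖x‖) ξ := memP2_integrable_norm hξ
  have Iη1 : Integrable (fun x : Rd d => ‖x‖) η := memP2_integrable_norm hη
  have Iγf1 : Integrable (fun z : Rd d × Rd d => ‖z.1‖) γ := by
    have h : Integrable (fun x : Rd d => ‖x‖) (γ.map Prod.fst) := by rw [hγ1]; exact Iξ1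
    exact h.comp_measurable measurable_fst
  have Iγs1 : Integrable (fun z : Rd d × Rd d => ‖z.2‖) γ := by
    have h : Integrable (fun x : Rd d => ‖x‖) (γ.map Prod.snd) := by rw [hγ2]; exact Iη1
    exact h.comp_measurable measurable_snd
  have Iγf2 : Integrable (fun z : Rd d × Rd d => ‖z.1‖^2) γ := by
    have h : Integrable (fun x : Rd d => ‖x‖^2) (γ.map Prod.fst) := by rw [hγ1]; exact Iξ2
    exact h.comp_measurable measurable_fst
  have Iγs2 : Integrable (fun z : Rd d × Rd d => ‖z.2‖^2) γ := by
    have h : Integrable (fun x : Rd d => ‖x‖^2) (γ.map Prod.snd) := by rw [hγ2]; exact Iη2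
    exact h.comp_measurable measurable_snd
  have Iγ12 : Integrable (fun z : Rd d × Rd d => ‖z.1 - z.2‖^2) γ := by
    refine ((Iγf2.const_mul 2).add (Iγs2.const_mul 2)).mono'
      (Continuous.aestronglyMeasurable (by fun_prop)) (Eventually.of_forall fun z => ?_)
    rw [Real.norm_eq_abs, abs_of_nonneg (by positivity)]
    exact sq_sub_le _ _
  -- key identification of the transport cost
  have Ikey : ∫ z : Rd d × Rd d, ‖z.1 - z.2‖^2 ∂γ = W2sq ξ η := by
    rw [integral_eq_lintegral_of_nonneg_ae (Eventually.of_forall fun z => by positivity)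
      (Continuous.aestronglyMeasurable (by fun_prop))]
    rw [hγopt]; rfl
  have W2nonneg : 0 ≤ W2sq ξ η := ENNReal.toReal_nonneg
  -- product measure facts
  have hΓfst : (γ.prod γ).map Prod.fst = γ := by
    simp [Measure.map_fst_prod]
  have hΓsnd : (γ.prod γ).map Prod.snd = γ := by
    simp [Measure.map_snd_prod]
  -- integrability over the product of the coupling with itself
  have IΓ11 : Integrable (fun p : (Rd d × Rd d) × (Rd d × Rd d) => ‖p.1.1‖) (γ.prod γ) := by
    have h : Integrable (fun z : Rd d × Rd d => ‖z.1‖) ((γ.prod γ).map Prod.fst) := by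
      rw [hΓfst]; exact Iγf1
    exact h.comp_measurable measurable_fst
  have IΓ12 : Integrable (fun p : (Rd d × Rd d) × (Rd d × Rd d) => ‖p.1.2‖) (γ.prod γ) := by
    have h : Integrable (fun z : Rd d × Rd d => ‖z.2‖) ((γ.prod γ).map Prod.fst) := by
      rw [hΓfst]; exact Iγs1
    exact h.comp_measurable measurable_fst
  have IΓ21 : Integrable (fun p : (Rd d × Rd d) × (Rd d × Rd d) => ‖p.2.1‖) (γ.prod γ) := by
    have h : Integrable (fun z : Rd d × Rd d => ‖z.1‖) ((γ.prod γ).map Prod.snd) := by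
      rw [hΓsnd]; exact Iγf1
    exact h.comp_measurable measurable_snd
  have IΓ22 : Integrable (fun p : (Rd d × Rd d) × (Rd d × Rd d) => ‖p.2.2‖) (γ.prod γ) := by
    have h : Integrable (fun z : Rd d × Rd d => ‖z.2‖) ((γ.prod γ).map Prod.snd) := by
      rw [hΓsnd]; exact Iγs1
    exact h.comp_measurable measurable_snd
  have IΓsq1 : Integrable (fun p : (Rd d × Rd d) × (Rd d × Rd d) => ‖p.1.1 - p.1.2‖^2)
      (γ.prod γ) := by
    have h : Integrable (fun z : Rd d × Rd d => ‖z.1 - z.2‖^2) ((γ.prod γ).map Prod.fst) := by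
      rw [hΓfst]; exact Iγ12
    exact h.comp_measurable measurable_fst
  have IΓsq2 : Integrable (fun p : (Rd d × Rd d) × (Rd d × Rd d) => ‖p.2.1 - p.2.2‖^2)
      (γ.prod γ) := by
    have h : Integrable (fun z : Rd d × Rd d => ‖z.1 - z.2‖^2) ((γ.prod γ).map Prod.snd) := by
      rw [hΓsnd]; exact Iγ12
    exact h.comp_measurable measurable_snd
  have Ig4 : Integrable (fun p : (Rd d × Rd d) × (Rd d × Rd d) =>
      (KW:ℝ) * (‖p.1.1‖ + ‖p.1.2‖ + ‖p.2.1‖ + ‖p.2.2‖)) (γ.prod γ) :=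
    (((IΓ11.add IΓ12).add IΓ21).add IΓ22).const_mul _
  have IΓWT : Integrable (fun p : (Rd d × Rd d) × (Rd d × Rd d) => W (T p.1 - T p.2))
      (γ.prod γ) := by
    refine Ig4.mono' (Continuous.aestronglyMeasurable (hW.cont.comp (by fun_prop)))
      (Eventually.of_forall fun p => ?_)
    rw [Real.norm_eq_abs]
    refine (hWb _).trans ?_
    have h1 : ‖T p.1 - T p.2‖ ≤ ‖p.1.1‖ + ‖p.1.2‖ + ‖p.2.1‖ + ‖p.2.2‖ := by
      refine (norm_sub_le _ _).trans ?_
      have := hTn p.1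
      have := hTn p.2
      linarith
    exact mul_le_mul_of_nonneg_left h1 (by positivity)
  have IΓWa : Integrable (fun p : (Rd d × Rd d) × (Rd d × Rd d) => W (p.1.1 - p.2.1))
      (γ.prod γ) := by
    refine Ig4.mono' (Continuous.aestronglyMeasurable (hW.cont.comp (by fun_prop)))
      (Eventually.of_forall fun p => ?_)
    rw [Real.norm_eq_abs]
    refine (hWb _).trans ?_
    refine mul_le_mul_of_nonneg_left ?_ (by positivity)
    refine (norm_sub_le _ _).trans ?_
    have := norm_nonneg p.1.2
    have := norm_nonneg p.2.2
    linarith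
  have IΓWb : Integrable (fun p : (Rd d × Rd d) × (Rd d × Rd d) => W (p.1.2 - p.2.2))
      (γ.prod γ) := by
    refine Ig4.mono' (Continuous.aestronglyMeasurable (hW.cont.comp (by fun_prop)))
      (Eventually.of_forall fun p => ?_)
    rw [Real.norm_eq_abs]
    refine (hWb _).trans ?_
    refine mul_le_mul_of_nonneg_left ?_ (by positivity)
    refine (norm_sub_le _ _).trans ?_
    have := norm_nonneg p.1.1
    have := norm_nonneg p.2.1
    linarith
  -- pointwise convexity inequality for W
  have PW : ∀ p : (Rd d × Rd d) × (Rd d × Rd d), W (T p.1 - T p.2) ≤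
      (1-s) * W (p.1.1 - p.2.1) + s * W (p.1.2 - p.2.2)
        - lam * (s*(1-s)) * (‖p.1.1 - p.1.2‖^2 + ‖p.2.1 - p.2.2‖^2) := by
    intro p
    have hb := lamConvex_bound hW.lam_convex hs0 hs1 (p.1.1 - p.2.1) (p.1.2 - p.2.2)
    have he : (1-s)•(p.1.1 - p.2.1) + s•(p.1.2 - p.2.2) = T p.1 - T p.2 := by
      simp only [hTdef]; module
    rw [he] at hb
    have hd : ‖(p.1.1 - p.2.1) - (p.1.2 - p.2.2)‖^2
        ≤ 2*‖p.1.1 - p.1.2‖^2 + 2*‖p.2.1 - p.2.2‖^2 := by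
      have hrw : (p.1.1 - p.2.1) - (p.1.2 - p.2.2) = (p.1.1 - p.1.2) - (p.2.1 - p.2.2) := by
        abel
      rw [hrw]; exact sq_sub_le _ _
    have hsl : 0 ≤ -lam/2 * (s*(1-s)) := by
      apply mul_nonneg _ hss
      linarith [hW.lam_nonpos]
    nlinarith [mul_le_mul_of_nonneg_left hd hsl]
  -- integrate the pointwise inequality over γ ⊗ γ
  have stepW : ∫ p, W (T p.1 - T p.2) ∂(γ.prod γ) ≤
      (1-s) * ∫ p, W (p.1.1 - p.2.1) ∂(γ.prod γ)
      + s * ∫ p, W (p.1.2 - p.2.2) ∂(γ.prod γ)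
      - lam * (s*(1-s)) * ((∫ p, ‖p.1.1 - p.1.2‖^2 ∂(γ.prod γ))
          + ∫ p, ‖p.2.1 - p.2.2‖^2 ∂(γ.prod γ)) := by
    have IRHS : Integrable (fun p : (Rd d × Rd d) × (Rd d × Rd d) =>
        (1-s) * W (p.1.1 - p.2.1) + s * W (p.1.2 - p.2.2)
          - lam * (s*(1-s)) * (‖p.1.1 - p.1.2‖^2 + ‖p.2.1 - p.2.2‖^2)) (γ.prod γ) := by
      exact ((IΓWa.const_mul (1-s)).add (IΓWb.const_mul s)).sub
        ((IΓsq1.add IΓsq2).const_mul (lam * (s*(1-s))))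
    have IA1 : Integrable (fun p : (Rd d × Rd d) × (Rd d × Rd d) =>
        (1-s) * W (p.1.1 - p.2.1)) (γ.prod γ) := by exact IΓWa.const_mul (1-s)
    have IA2 : Integrable (fun p : (Rd d × Rd d) × (Rd d × Rd d) =>
        s * W (p.1.2 - p.2.2)) (γ.prod γ) := by exact IΓWb.const_mul s
    have IA : Integrable (fun p : (Rd d × Rd d) × (Rd d × Rd d) =>
        (1-s) * W (p.1.1 - p.2.1) + s * W (p.1.2 - p.2.2)) (γ.prod γ) := by
      exact IA1.add IA2
    have IB : Integrable (fun p : (Rd d × Rd d) × (Rd d × Rd d) =>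
        lam * (s*(1-s)) * (‖p.1.1 - p.1.2‖^2 + ‖p.2.1 - p.2.2‖^2)) (γ.prod γ) := by
      exact (IΓsq1.add IΓsq2).const_mul (lam * (s*(1-s)))
    have h := integral_mono IΓWT IRHS PW
    rw [integral_sub IA IB, integral_add IA1 IA2,
      integral_const_mul, integral_const_mul, integral_const_mul,
      integral_add IΓsq1 IΓsq2] at h
    exact h
  -- identify the integrals over γ ⊗ γ with the original double integrals
  have hmapξ : ξ.prod ξ = (γ.prod γ).map (Prod.map Prod.fst Prod.fst) := by
    rw [← hγ1]; exact Measure.map_prod_map γ γ measurable_fst measurable_fst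
  have hmapη : η.prod η = (γ.prod γ).map (Prod.map Prod.snd Prod.snd) := by
    rw [← hγ2]; exact Measure.map_prod_map γ γ measurable_snd measurable_snd
  have hmapT : (γ.map T).prod (γ.map T) = (γ.prod γ).map (Prod.map T T) :=
    Measure.map_prod_map γ γ hTm hTm
  have EWξ : ∫ x, ∫ y, W (x - y) ∂ξ ∂ξ = ∫ p, W (p.1.1 - p.2.1) ∂(γ.prod γ) := by
    have hint : Integrable (fun q : Rd d × Rd d => W (q.1 - q.2)) (ξ.prod ξ) := by
      rw [hmapξ]
      refine (integrable_map_measure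
        (Continuous.aestronglyMeasurable (hW.cont.comp (by fun_prop)))
        (measurable_fst.prodMap measurable_fst).aemeasurable).mpr ?_
      exact IΓWa
    have h2 : ∫ q : Rd d × Rd d, W (q.1 - q.2) ∂(ξ.prod ξ) = ∫ x, ∫ y, W (x - y) ∂ξ ∂ξ :=
      integral_prod _ hint
    rw [← h2, hmapξ]
    exact integral_map (measurable_fst.prodMap measurable_fst).aemeasurable
      hWc2.aestronglyMeasurable
  have EWη : ∫ x, ∫ y, W (x - y) ∂η ∂η = ∫ p, W (p.1.2 - p.2.2) ∂(γ.prod γ) := by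
    have hint : Integrable (fun q : Rd d × Rd d => W (q.1 - q.2)) (η.prod η) := by
      rw [hmapη]
      refine (integrable_map_measure
        (Continuous.aestronglyMeasurable (hW.cont.comp (by fun_prop)))
        (measurable_snd.prodMap measurable_snd).aemeasurable).mpr ?_
      exact IΓWb
    have h2 : ∫ q : Rd d × Rd d, W (q.1 - q.2) ∂(η.prod η) = ∫ x, ∫ y, W (x - y) ∂η ∂η :=
      integral_prod _ hint
    rw [← h2, hmapη]
    exact integral_map (measurable_snd.prodMap measurable_snd).aemeasurable
      hWc2.aestronglyMeasurable
  have EWT : ∫ x, ∫ y, W (x - y) ∂(γ.map T) ∂(γ.map T) = ∫ p, W (T p.1 - T p.2) ∂(γ.prod γ) := by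
    have hint : Integrable (fun q : Rd d × Rd d => W (q.1 - q.2)) ((γ.map T).prod (γ.map T)) := by
      rw [hmapT]
      refine (integrable_map_measure
        (Continuous.aestronglyMeasurable (hW.cont.comp (by fun_prop)))
        (hTm.prodMap hTm).aemeasurable).mpr ?_
      exact IΓWT
    have h2 : ∫ q : Rd d × Rd d, W (q.1 - q.2) ∂((γ.map T).prod (γ.map T))
        = ∫ x, ∫ y, W (x - y) ∂(γ.map T) ∂(γ.map T) := integral_prod _ hint
    rw [← h2, hmapT]
    exact integral_map (hTm.prodMap hTm).aemeasurable hWc2.aestronglyMeasurable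
  have EΓsq1 : ∫ p, ‖p.1.1 - p.1.2‖^2 ∂(γ.prod γ) = W2sq ξ η := by
    have h : ∫ z : Rd d × Rd d, ‖z.1 - z.2‖^2 ∂((γ.prod γ).map Prod.fst)
        = ∫ p, ‖p.1.1 - p.1.2‖^2 ∂(γ.prod γ) :=
      integral_map measurable_fst.aemeasurable hnc2.aestronglyMeasurable
    rw [← h, hΓfst, Ikey]
  have EΓsq2 : ∫ p, ‖p.2.1 - p.2.2‖^2 ∂(γ.prod γ) = W2sq ξ η := by
    have h : ∫ z : Rd d × Rd d, ‖z.1 - z.2‖^2 ∂((γ.prod γ).map Prod.snd)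
        = ∫ p, ‖p.2.1 - p.2.2‖^2 ∂(γ.prod γ) :=
      integral_map measurable_snd.aemeasurable hnc2.aestronglyMeasurable
    rw [← h, hΓsnd, Ikey]
  have claimW : ∫ x, ∫ y, W (x - y) ∂(γ.map T) ∂(γ.map T) ≤
      (1-s) * ∫ x, ∫ y, W (x - y) ∂ξ ∂ξ + s * ∫ x, ∫ y, W (x - y) ∂η ∂η
        - lam * (s*(1-s)) * (2 * W2sq ξ η) := by
    rw [EWT, EWξ, EWη]
    rw [EΓsq1, EΓsq2] at stepW
    linarith
  -- V part
  have hVc : Continuous V := hV.contDiff.continuous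
  set νu : ℝ := (ν Set.univ).toReal with hνu
  have hνu0 : 0 ≤ νu := ENNReal.toReal_nonneg
  have hM0 : 0 ≤ M := hνu0.trans hνM
  have htrans : ∀ x y : Rd d, Integrable (fun w => V (x - w)) ν →
      Integrable (fun w => V (y - w)) ν := by
    intro x y hx
    have hdiff : Integrable (fun w => V (y - w) - V (x - w)) ν := by
      refine (integrable_const ((KV:ℝ) * ‖y - x‖)).mono'
        (Continuous.aestronglyMeasurable ?_) (Eventually.of_forall fun w => ?_)
      · exact (hVc.comp (continuous_const.sub continuous_id)).sub
          (hVc.comp (continuous_const.sub continuous_id))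
      · have h := hV.lip.dist_le_mul (y - w) (x - w)
        rw [Real.dist_eq, dist_eq_norm, sub_sub_sub_cancel_right] at h
        rw [Real.norm_eq_abs]
        exact h
    have hsum : Integrable (fun w => V (x - w) + (V (y - w) - V (x - w))) ν := by
      exact hx.add hdiff
    exact hsum.congr (Eventually.of_forall fun w => by ring)
  have claimV : ∫ x, G x ∂(γ.map T) ≤ (1-s) * ∫ x, G x ∂ξ + s * ∫ x, G x ∂η
      - lam'/2 * (s*(1-s)) * M * W2sq ξ η := by
    by_cases hVi : Integrable (fun w => V (0 - w)) ν
    case neg =>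
      have hall : ∀ x : Rd d, ¬ Integrable (fun w => V (x - w)) ν :=
        fun x hx => hVi (htrans x 0 hx)
      have hG0 : G = fun _ => 0 := by
        funext x
        exact integral_undef (hall x)
      rw [hG0]
      simp only [integral_zero]
      have h1 : 0 ≤ -lam'/2 * (s*(1-s)) * M * W2sq ξ η := by
        refine mul_nonneg (mul_nonneg (mul_nonneg ?_ hss) hM0) W2nonneg
        linarith
      linarith
    case pos =>
      have hVint : ∀ x : Rd d, Integrable (fun w => V (x - w)) ν := fun x => htrans 0 x hVi
      have hGlip : ∀ x y : Rd d, |G x - G y| ≤ (KV:ℝ) * νu * ‖x - y‖ := by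
        intro x y
        have hsub : G x - G y = ∫ w, (V (x - w) - V (y - w)) ∂ν :=
          (integral_sub (hVint x) (hVint y)).symm
        rw [hsub]
        have habs : |∫ w, (V (x - w) - V (y - w)) ∂ν| ≤ ∫ w, |V (x - w) - V (y - w)| ∂ν := by
          rw [← Real.norm_eq_abs]
          refine (norm_integral_le_integral_norm _).trans_eq ?_
          simp only [Real.norm_eq_abs]
        refine habs.trans ?_
        have hb : ∀ w : Rd d, |V (x - w) - V (y - w)| ≤ (KV:ℝ) * ‖x - y‖ := by
          intro w
          have h := hV.lip.dist_le_mul (x - w) (y - w)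
          rw [Real.dist_eq, dist_eq_norm, sub_sub_sub_cancel_right] at h
          exact h
        have hIabs : Integrable (fun w => |V (x - w) - V (y - w)|) ν := by
          exact ((hVint x).sub (hVint y)).abs
        calc ∫ w, |V (x - w) - V (y - w)| ∂ν ≤ ∫ _w : Rd d, (KV:ℝ) * ‖x - y‖ ∂ν :=
            integral_mono hIabs (integrable_const _) hb
          _ = νu * ((KV:ℝ) * ‖x - y‖) := by rw [integral_const, smul_eq_mul, measureReal_def]
          _ = (KV:ℝ) * νu * ‖x - y‖ := by ring
      have hGcont : Continuous G := by
        have hL : LipschitzWith (Real.toNNReal ((KV:ℝ) * νu)) G := by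
          apply LipschitzWith.of_dist_le_mul
          intro x y
          rw [Real.dist_eq, dist_eq_norm]
          refine (hGlip x y).trans ?_
          rw [Real.coe_toNNReal _ (by positivity)]
        exact hL.continuous
      have hGgrow : ∀ x : Rd d, |G x| ≤ |G 0| + (KV:ℝ) * νu * ‖x‖ := by
        intro x
        have h := hGlip x 0
        rw [sub_zero] at h
        have h2 := abs_sub_abs_le_abs_sub (G x) (G 0)
        linarith
      have IγG1 : Integrable (fun z : Rd d × Rd d => G z.1) γ := by
        have Ig : Integrable (fun z : Rd d × Rd d => |G 0| + (KV:ℝ) * νu * ‖z.1‖) γ := by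
          exact (integrable_const _).add (Iγf1.const_mul _)
        refine Ig.mono' ((hGcont.comp continuous_fst).aestronglyMeasurable)
          (Eventually.of_forall fun z => ?_)
        rw [Real.norm_eq_abs]
        exact hGgrow z.1
      have IγG2 : Integrable (fun z : Rd d × Rd d => G z.2) γ := by
        have Ig : Integrable (fun z : Rd d × Rd d => |G 0| + (KV:ℝ) * νu * ‖z.2‖) γ := by
          exact (integrable_const _).add (Iγs1.const_mul _)
        refine Ig.mono' ((hGcont.comp continuous_snd).aestronglyMeasurable)
          (Eventually.of_forall fun z => ?_)
        rw [Real.norm_eq_abs]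
        exact hGgrow z.2
      have IγGT : Integrable (fun z : Rd d × Rd d => G (T z)) γ := by
        have Ig : Integrable (fun z : Rd d × Rd d => |G 0| + (KV:ℝ) * νu * (‖z.1‖ + ‖z.2‖)) γ := by
          exact (integrable_const _).add ((Iγf1.add Iγs1).const_mul _)
        refine Ig.mono' ((hGcont.comp hTc).aestronglyMeasurable)
          (Eventually.of_forall fun z => ?_)
        rw [Real.norm_eq_abs]
        refine (hGgrow (T z)).trans ?_
        have h := mul_le_mul_of_nonneg_left (hTn z) (by positivity : (0:ℝ) ≤ (KV:ℝ) * νu)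
        linarith
      have claimVz : ∀ z : Rd d × Rd d, G (T z) ≤ (1-s) * G z.1 + s * G z.2
          - lam'/2 * (s*(1-s)) * νu * ‖z.1 - z.2‖^2 := by
        intro z
        have hb : ∀ w : Rd d, V (T z - w) ≤ (1-s) * V (z.1 - w) + s * V (z.2 - w)
            - lam'/2 * (s*(1-s)) * ‖z.1 - z.2‖^2 := by
          intro w
          have h := lamConvex_bound hVconv hs0 hs1 (z.1 - w) (z.2 - w)
          have he : (1-s)•(z.1 - w) + s•(z.2 - w) = T z - w := by
            simp only [hTdef]; module
          have he2 : (z.1 - w) - (z.2 - w) = z.1 - z.2 := by abel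
          rw [he, he2] at h
          exact h
        have hI1 : Integrable (fun w => (1-s) * V (z.1 - w)) ν := by
          exact (hVint z.1).const_mul _
        have hI2 : Integrable (fun w => s * V (z.2 - w)) ν := by
          exact (hVint z.2).const_mul _
        have hI3 : Integrable (fun _w : Rd d => lam'/2 * (s*(1-s)) * ‖z.1 - z.2‖^2) ν :=
          integrable_const _
        have hIa : Integrable (fun w => (1-s) * V (z.1 - w) + s * V (z.2 - w)) ν := by
          exact hI1.add hI2
        have hIr : Integrable (fun w => (1-s) * V (z.1 - w) + s * V (z.2 - w)
            - lam'/2 * (s*(1-s)) * ‖z.1 - z.2‖^2) ν := by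
          exact hIa.sub hI3
        have h := integral_mono (hVint (T z)) hIr hb
        rw [integral_sub hIa hI3, integral_add hI1 hI2, integral_const_mul, integral_const_mul,
          integral_const, smul_eq_mul, measureReal_def] at h
        show (∫ y, V (T z - y) ∂ν) ≤ (1-s) * (∫ y, V (z.1 - y) ∂ν) + s * (∫ y, V (z.2 - y) ∂ν)
          - lam'/2 * (s*(1-s)) * νu * ‖z.1 - z.2‖^2
        have : νu * (lam'/2 * (s*(1-s)) * ‖z.1 - z.2‖^2)
            = lam'/2 * (s*(1-s)) * νu * ‖z.1 - z.2‖^2 := by ring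
        rw [this] at h
        exact h
      have IV1 : Integrable (fun z : Rd d × Rd d => (1-s) * G z.1) γ := by
        exact IγG1.const_mul _
      have IV2 : Integrable (fun z : Rd d × Rd d => s * G z.2) γ := by
        exact IγG2.const_mul _
      have IVa : Integrable (fun z : Rd d × Rd d => (1-s) * G z.1 + s * G z.2) γ := by
        exact IV1.add IV2
      have IVb : Integrable
          (fun z : Rd d × Rd d => lam'/2 * (s*(1-s)) * νu * ‖z.1 - z.2‖^2) γ := by
        exact Iγ12.const_mul _
      have IVr : Integrable (fun z : Rd d × Rd d => (1-s) * G z.1 + s * G z.2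
          - lam'/2 * (s*(1-s)) * νu * ‖z.1 - z.2‖^2) γ := by
        exact IVa.sub IVb
      have h := integral_mono IγGT IVr claimVz
      rw [integral_sub IVa IVb, integral_add IV1 IV2, integral_const_mul, integral_const_mul,
        integral_const_mul, Ikey] at h
      have hmapG : ∫ x, G x ∂(γ.map T) = ∫ z, G (T z) ∂γ :=
        integral_map hTm.aemeasurable hGcont.aestronglyMeasurable
      have hmξ : ∫ z : Rd d × Rd d, G z.1 ∂γ = ∫ x, G x ∂ξ := by
        rw [← hγ1]
        exact (integral_map measurable_fst.aemeasurable hGcont.aestronglyMeasurable).symm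
      have hmη : ∫ z : Rd d × Rd d, G z.2 ∂γ = ∫ x, G x ∂η := by
        rw [← hγ2]
        exact (integral_map measurable_snd.aemeasurable hGcont.aestronglyMeasurable).symm
      rw [hmξ, hmη] at h
      rw [hmapG]
      refine h.trans ?_
      have hfac : 0 ≤ (-(lam'/2) * (s*(1-s))) * ((M - νu) * W2sq ξ η) :=
        mul_nonneg (mul_nonneg (by linarith) hss) (mul_nonneg (by linarith) W2nonneg)
      nlinarith [hfac]
  -- final assembly
  have hmin1 : min lam lam' ≤ lam := min_le_left _ _
  have hmin2 : min lam lam' ≤ lam' := min_le_right _ _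
  have h1 : 0 ≤ (lam - min lam lam') * ((s*(1-s)) * W2sq ξ η) :=
    mul_nonneg (by linarith) (mul_nonneg hss W2nonneg)
  have h2 : 0 ≤ M * ((lam' - min lam lam') * ((s*(1-s)) * W2sq ξ η)) :=
    mul_nonneg hM0 (mul_nonneg (by linarith) (mul_nonneg hss W2nonneg))
  nlinarith [claimW, claimV, h1, h2]



end
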